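/- If O ⊆ 𝕋 is a nonempty finite minimal invariant set, then every x ∈ O has finite additive order, and this order is coprime to 6 (i.e. gcd(addOrderOf x, 6) = 1). In other words, every point of a finite minimal orbit is a rational point whose reduced denominator is divisible by neither 2 nor 3. -/
import Mathlib

open MeasureTheory

noncomputable section

/-- The circle `[0,1]` with endpoints identified. -/
abbrev 𝕋 := AddCircle (1 : ℝ)

instance : IsProbabilityMeasure (volume : Measure 𝕋) :=
  ⟨by simp [AddCircle.measure_univ]⟩

/-- The doubling map. -/
def T (x : 𝕋) : 𝕋 := 2 • x

/-- The tripling map. -/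
def S (x : 𝕋) : 𝕋 := 3 • x

/-- A set is invariant if it is forward invariant under both `T` and `S`. -/
def Invariant (O : Set 𝕋) : Prop := T '' O ⊆ O ∧ S '' O ⊆ O

/-- A nonempty finite invariant set is minimal if every nonempty invariant subset equals it. -/
def MinimalInvariant (O : Set 𝕋) : Prop :=
  O.Nonempty ∧ O.Finite ∧ Invariant O ∧
    ∀ O' ⊆ O, O'.Nonempty → Invariant O' → O' = O

/-- A measure is invariant if both `T` and `S` are measure preserving for it. -/
def InvariantMeasure (μ : Measure 𝕋) : Prop :=
  MeasurePreserving T μ μ ∧ MeasurePreserving S μ μ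

/-- The normalized counting measure on a set: each point of a finite set `O`
gets mass `1 / |O|`. -/
def normCount (O : Set 𝕋) : Measure 𝕋 :=
  (O.ncard : ENNReal)⁻¹ • Measure.count.restrict O

/-- `Fn n` is the set of points `i/n` of the circle with `0 < i < n`. -/
def Fn (n : ℕ) : Set 𝕋 := {x : 𝕋 | ∃ i : ℕ, 0 < i ∧ i < n ∧ x = ((i : ℝ) / n : ℝ)}

lemma two_smul_mem {O : Set 𝕋} (h : Invariant O) {x : 𝕋} (hx : x ∈ O) : (2 : ℕ) • x ∈ O := by
  have : T x ∈ O := h.1 ⟨x, hx, rfl⟩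
  simpa [T] using this

lemma three_smul_mem {O : Set 𝕋} (h : Invariant O) {x : 𝕋} (hx : x ∈ O) : (3 : ℕ) • x ∈ O := by
  have : S x ∈ O := h.2 ⟨x, hx, rfl⟩
  simpa [S] using this

lemma finAddOrder_of_mem {O : Set 𝕋} (hfin : O.Finite) (hinv : Invariant O) {x : 𝕋}
    (hx : x ∈ O) : IsOfFinAddOrder x := by
  have hmem : ∀ a : ℕ, (2^a : ℕ) • x ∈ O := by
    intro a
    induction a with
    | zero => simpa using hx
    | succ n ih =>
      have := two_smul_mem hinv ih
      rwa [smul_smul, ← pow_succ'] at this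
  have hni : ¬ Function.Injective (fun a : ℕ => (2^a : ℕ) • x) := by
    intro hinj
    exact (Set.infinite_of_injective_forall_mem hinj hmem) hfin
  simp only [Function.Injective, not_forall] at hni
  obtain ⟨a, b, hab, hne⟩ := hni
  rcases lt_or_gt_of_ne hne with h | h
  · rw [isOfFinAddOrder_iff_nsmul_eq_zero]
    refine ⟨2^b - 2^a, by have := Nat.pow_lt_pow_right (by norm_num : 1 < 2) h; omega, ?_⟩
    rw [sub_nsmul _ (le_of_lt (Nat.pow_lt_pow_right one_lt_two h)), hab]
    exact add_neg_cancel _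
  · rw [isOfFinAddOrder_iff_nsmul_eq_zero]
    refine ⟨2^a - 2^b, by have := Nat.pow_lt_pow_right (by norm_num : 1 < 2) h; omega, ?_⟩
    rw [sub_nsmul _ (le_of_lt (Nat.pow_lt_pow_right one_lt_two h)), ← hab]
    exact add_neg_cancel _

/-- Every point of a nonempty finite minimal invariant set has finite additive order,
coprime to `6`. -/
theorem minimal_orbit_order_coprime_six (O : Set 𝕋) (hO : MinimalInvariant O) :
    ∀ x ∈ O, IsOfFinAddOrder x ∧ Nat.gcd (addOrderOf x) 6 = 1 := by
  obtain ⟨hne, hfin, hinv, hmin⟩ := hO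
  set O' : Set 𝕋 := {x ∈ O | IsOfFinAddOrder x ∧ Nat.gcd (addOrderOf x) 6 = 1} with hO'
  -- O' is invariant
  have hinv' : Invariant O' := by
    constructor
    · rintro _ ⟨x, ⟨hxO, hxf, hxc⟩, rfl⟩
      have h2 : Nat.Coprime (addOrderOf x) 2 :=
        Nat.Coprime.coprime_dvd_right (by norm_num) hxc
      refine ⟨two_smul_mem hinv hxO, ?_, ?_⟩
      · show IsOfFinAddOrder ((2:ℕ) • x)
        exact hxf.nsmul
      · show Nat.gcd (addOrderOf ((2:ℕ) • x)) 6 = 1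
        rw [h2.addOrderOf_nsmul]
        exact hxc
    · rintro _ ⟨x, ⟨hxO, hxf, hxc⟩, rfl⟩
      have h3 : Nat.Coprime (addOrderOf x) 3 :=
        Nat.Coprime.coprime_dvd_right (by norm_num) hxc
      refine ⟨three_smul_mem hinv hxO, ?_, ?_⟩
      · show IsOfFinAddOrder ((3:ℕ) • x)
        exact hxf.nsmul
      · show Nat.gcd (addOrderOf ((3:ℕ) • x)) 6 = 1
        rw [h3.addOrderOf_nsmul]
        exact hxc
  -- O' is nonempty: strong induction on order
  have key : ∀ n : ℕ, ∀ x ∈ O, addOrderOf x = n → O'.Nonempty := by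
    intro n
    induction n using Nat.strong_induction_on with
    | _ n ih =>
      intro x hx hord
      have hxf : IsOfFinAddOrder x := finAddOrder_of_mem hfin hinv hx
      have hn0 : 0 < n := hord ▸ hxf.addOrderOf_pos
      by_cases hc : Nat.gcd n 6 = 1
      · exact ⟨x, hx, hxf, hord ▸ hc⟩
      · -- n divisible by 2 or 3
        have h23 : 2 ∣ n ∨ 3 ∣ n := by
          by_contra h
          push_neg at h
          have c2 : Nat.Coprime n 2 :=
            Nat.coprime_comm.mp ((Nat.prime_two.coprime_iff_not_dvd).mpr h.1)
          have c3 : Nat.Coprime n 3 :=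
            Nat.coprime_comm.mp ((Nat.prime_three.coprime_iff_not_dvd).mpr h.2)
          have : Nat.Coprime n 6 := by
            have := c2.mul_right c3
            norm_num at this
            exact this
          exact hc this
        rcases h23 with h2 | h2
        · have hy : (2:ℕ) • x ∈ O := two_smul_mem hinv hx
          have hord2 : addOrderOf ((2:ℕ) • x) = n / 2 := by
            rw [addOrderOf_nsmul_of_dvd (by norm_num) (hord ▸ h2), hord]
          exact ih (n / 2) (Nat.div_lt_self hn0 (by norm_num)) _ hy hord2
        · have hy : (3:ℕ) • x ∈ O := three_smul_mem hinv hx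
          have hord3 : addOrderOf ((3:ℕ) • x) = n / 3 := by
            rw [addOrderOf_nsmul_of_dvd (by norm_num) (hord ▸ h2), hord]
          exact ih (n / 3) (Nat.div_lt_self hn0 (by norm_num)) _ hy hord3
  obtain ⟨x0, hx0⟩ := hne
  have hne' : O'.Nonempty := key (addOrderOf x0) x0 hx0 rfl
  have := hmin O' (fun y hy => hy.1) hne' hinv'
  intro x hx
  rw [← this] at hx
  exact hx.2
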